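/- Let ξ = -2(1-2ρ)(x∂_x + y∂_y) and g = (dx² + dy²)/(E + x² + y²) on ℝ², with E > 0 and ρ ≠ 1/2 constants. Then L_ξ g = ψ·g with ψ = -4(1-2ρ)E/(E + x² + y²), and L_ξ L_ξ g = α · L_ξ g with α = -4(1-2ρ)(E - x² - y²)/(E + x² + y²). In particular, ξ is a mixed Killing vector field. -/

import Mathlib

open Real

noncomputable section

/-- Coordinate partial derivative on `ℝ²`. -/
def pd (i : Fin 2) (f : (Fin 2 → ℝ) → ℝ) (p : Fin 2 → ℝ) : ℝ :=
  fderiv ℝ f p (Pi.single i 1)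

/-- Coordinate Lie derivative of a metric `g` along `V` on `ℝ²`. -/
def lieDeriv (V : (Fin 2 → ℝ) → (Fin 2 → ℝ))
    (g : (Fin 2 → ℝ) → Matrix (Fin 2) (Fin 2) ℝ) (p : Fin 2 → ℝ) :
    Matrix (Fin 2) (Fin 2) ℝ :=
  fun i j =>
    (∑ k, V p k * pd k (fun q => g q i j) p)
      + (∑ k, g p k j * pd i (fun q => V q k) p)
      + (∑ k, g p i k * pd j (fun q => V q k) p)

/-- The cigar Ricci–Bourguignon metric `g = (dx² + dy²)/(E + x² + y²)`. -/
def cigarRB (E : ℝ) : (Fin 2 → ℝ) → Matrix (Fin 2) (Fin 2) ℝ :=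
  fun p => (1 / (E + p 0 ^ 2 + p 1 ^ 2)) • (1 : Matrix (Fin 2) (Fin 2) ℝ)

/-- The potential vector field `ξ = -2(1-2ρ)(x∂_x + y∂_y)`. -/
def xiRB (ρ : ℝ) : (Fin 2 → ℝ) → (Fin 2 → ℝ) :=
  fun p => (-2 * (1 - 2 * ρ)) • p

lemma pd_const (k : Fin 2) (c : ℝ) (p : Fin 2 → ℝ) : pd k (fun _ => c) p = 0 := by
  simp [pd]

lemma pd_linear (c : ℝ) (i k : Fin 2) (p : Fin 2 → ℝ) :
    pd i (fun q => c * q k) p = if k = i then c else 0 := by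
  have h := (hasFDerivAt_apply (𝕜 := ℝ) k p).const_mul c
  rw [pd, h.fderiv]
  simp [Pi.single_apply]

lemma hasFDerivAt_D (E : ℝ) (p : Fin 2 → ℝ) :
    HasFDerivAt (fun q : Fin 2 → ℝ => E + q 0 ^ 2 + q 1 ^ 2)
      ((2 * p 0) • ContinuousLinearMap.proj (R := ℝ) 0
        + (2 * p 1) • ContinuousLinearMap.proj (R := ℝ) 1) p := by
  have h0 := (hasFDerivAt_apply (𝕜 := ℝ) (0 : Fin 2) p).mul (hasFDerivAt_apply (𝕜 := ℝ) (0 : Fin 2) p)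
  have h1 := (hasFDerivAt_apply (𝕜 := ℝ) (1 : Fin 2) p).mul (hasFDerivAt_apply (𝕜 := ℝ) (1 : Fin 2) p)
  have h := ((hasFDerivAt_const E p).add h0).add h1
  have hf : (fun q : Fin 2 → ℝ => E + q 0 ^ 2 + q 1 ^ 2)
      = fun q : Fin 2 → ℝ => E + q 0 * q 0 + q 1 * q 1 := by funext q; ring
  rw [hf]
  refine h.congr_fderiv ?_
  ext q
  simp [ContinuousLinearMap.add_apply, ContinuousLinearMap.smul_apply,
    ContinuousLinearMap.proj_apply, smul_eq_mul]
  ring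

lemma D_eval (p : Fin 2 → ℝ) (k : Fin 2) :
    ((2 * p 0) • ContinuousLinearMap.proj (R := ℝ) 0
        + (2 * p 1) • ContinuousLinearMap.proj (R := ℝ) 1 : (Fin 2 → ℝ) →L[ℝ] ℝ)
      (Pi.single k (1 : ℝ)) = 2 * p k := by
  fin_cases k <;>
    simp [ContinuousLinearMap.add_apply, ContinuousLinearMap.smul_apply,
      ContinuousLinearMap.proj_apply, Pi.single_apply, smul_eq_mul]

lemma pd_inv (E : ℝ) (p : Fin 2 → ℝ) (hD : E + p 0 ^ 2 + p 1 ^ 2 ≠ 0) (k : Fin 2) :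
    pd k (fun q => 1 / (E + q 0 ^ 2 + q 1 ^ 2)) p
      = -2 * p k / (E + p 0 ^ 2 + p 1 ^ 2) ^ 2 := by
  have hinv : HasFDerivAt (fun q : Fin 2 → ℝ => (E + q 0 ^ 2 + q 1 ^ 2)⁻¹)
      ((ContinuousLinearMap.smulRight (1 : ℝ →L[ℝ] ℝ)
          (-((E + p 0 ^ 2 + p 1 ^ 2) ^ 2)⁻¹)).comp
        ((2 * p 0) • ContinuousLinearMap.proj (R := ℝ) 0
          + (2 * p 1) • ContinuousLinearMap.proj (R := ℝ) 1)) p :=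
    (hasFDerivAt_inv hD).comp p (hasFDerivAt_D E p)
  simp only [one_div, pd]
  rw [hinv.fderiv]
  simp only [ContinuousLinearMap.coe_comp', Function.comp_apply, D_eval,
    ContinuousLinearMap.smulRight_apply, ContinuousLinearMap.one_apply, smul_eq_mul]
  field_simp

lemma pd_inv_sq (E A : ℝ) (p : Fin 2 → ℝ) (hD : E + p 0 ^ 2 + p 1 ^ 2 ≠ 0) (k : Fin 2) :
    pd k (fun q => A / (E + q 0 ^ 2 + q 1 ^ 2) ^ 2) p
      = -4 * A * p k / (E + p 0 ^ 2 + p 1 ^ 2) ^ 3 := by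
  have hsq : (E + p 0 ^ 2 + p 1 ^ 2) * (E + p 0 ^ 2 + p 1 ^ 2) ≠ 0 := mul_ne_zero hD hD
  have hmul := (hasFDerivAt_D E p).mul (hasFDerivAt_D E p)
  have hinv := ((hasFDerivAt_inv hsq).comp p hmul).const_mul A
  have hinv' : HasFDerivAt (fun q : Fin 2 → ℝ => A / (E + q 0 ^ 2 + q 1 ^ 2) ^ 2)
      (A • ((ContinuousLinearMap.smulRight (1 : ℝ →L[ℝ] ℝ)
          (-(((E + p 0 ^ 2 + p 1 ^ 2) * (E + p 0 ^ 2 + p 1 ^ 2)) ^ 2)⁻¹)).comp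
        ((E + p 0 ^ 2 + p 1 ^ 2) • ((2 * p 0) • ContinuousLinearMap.proj (R := ℝ) 0
            + (2 * p 1) • ContinuousLinearMap.proj (R := ℝ) 1)
          + (E + p 0 ^ 2 + p 1 ^ 2) • ((2 * p 0) • ContinuousLinearMap.proj (R := ℝ) 0
            + (2 * p 1) • ContinuousLinearMap.proj (R := ℝ) 1)))) p := by
    have hf : (fun q : Fin 2 → ℝ => A / (E + q 0 ^ 2 + q 1 ^ 2) ^ 2)
        = fun q : Fin 2 → ℝ =>
            A * ((E + q 0 ^ 2 + q 1 ^ 2) * (E + q 0 ^ 2 + q 1 ^ 2))⁻¹ := by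
      funext q; rw [div_eq_mul_inv]; ring_nf
    rw [hf]
    exact hinv
  rw [pd, hinv'.fderiv]
  fin_cases k <;>
    simp [ContinuousLinearMap.smulRight_apply, Pi.single_apply] <;>
    · field_simp
      ring

lemma lieDeriv_smul_one (c : ℝ) (φ : (Fin 2 → ℝ) → ℝ) (p : Fin 2 → ℝ) :
    lieDeriv (fun q => c • q) (fun q => φ q • (1 : Matrix (Fin 2) (Fin 2) ℝ)) p
      = (c * (p 0 * pd 0 φ p + p 1 * pd 1 φ p) + 2 * c * φ p)
          • (1 : Matrix (Fin 2) (Fin 2) ℝ) := by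
  funext i j
  fin_cases i <;> fin_cases j <;>
    simp [lieDeriv, Fin.sum_univ_two, Matrix.smul_apply, Matrix.one_apply, smul_eq_mul,
      mul_one, mul_zero, pd_linear, pd_const, Pi.smul_apply] <;> ring

theorem cigar_potential_mixedKilling (E ρ : ℝ) (hE : 0 < E) (hρ : ρ ≠ 1 / 2) :
    (∀ p : Fin 2 → ℝ, lieDeriv (xiRB ρ) (cigarRB E) p
        = (-4 * (1 - 2 * ρ) * E / (E + p 0 ^ 2 + p 1 ^ 2)) • cigarRB E p) ∧
    (∀ p : Fin 2 → ℝ, lieDeriv (xiRB ρ) (lieDeriv (xiRB ρ) (cigarRB E)) p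
        = (-4 * (1 - 2 * ρ) * (E - p 0 ^ 2 - p 1 ^ 2) / (E + p 0 ^ 2 + p 1 ^ 2)) •
            lieDeriv (xiRB ρ) (cigarRB E) p) ∧
    (∃ f : (Fin 2 → ℝ) → ℝ, ∀ p,
        lieDeriv (xiRB ρ) (lieDeriv (xiRB ρ) (cigarRB E)) p
          = f p • lieDeriv (xiRB ρ) (cigarRB E) p) := by
  have hDpos : ∀ p : Fin 2 → ℝ, 0 < E + p 0 ^ 2 + p 1 ^ 2 := fun p => by positivity
  have hD : ∀ p : Fin 2 → ℝ, E + p 0 ^ 2 + p 1 ^ 2 ≠ 0 := fun p => (hDpos p).ne'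
  have h1 : ∀ p : Fin 2 → ℝ, lieDeriv (xiRB ρ) (cigarRB E) p
      = (-4 * (1 - 2 * ρ) * E / (E + p 0 ^ 2 + p 1 ^ 2) ^ 2)
          • (1 : Matrix (Fin 2) (Fin 2) ℝ) := by
    intro p
    rw [show xiRB ρ = fun q => (-2 * (1 - 2 * ρ)) • q from rfl,
      show cigarRB E = fun q => (1 / (E + q 0 ^ 2 + q 1 ^ 2)) • (1 : Matrix (Fin 2) (Fin 2) ℝ)
        from rfl,
      lieDeriv_smul_one]
    congr 1
    rw [pd_inv E p (hD p) 0, pd_inv E p (hD p) 1]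
    field_simp
    ring
  have h1' : ∀ p : Fin 2 → ℝ, lieDeriv (xiRB ρ) (cigarRB E) p
      = (-4 * (1 - 2 * ρ) * E / (E + p 0 ^ 2 + p 1 ^ 2)) • cigarRB E p := by
    intro p
    rw [h1 p, cigarRB, smul_smul]
    congr 1
    rw [div_mul_div_comm]
    congr 1
    · ring
    · ring
  have h2 : ∀ p : Fin 2 → ℝ, lieDeriv (xiRB ρ) (lieDeriv (xiRB ρ) (cigarRB E)) p
      = (-4 * (1 - 2 * ρ) * (E - p 0 ^ 2 - p 1 ^ 2) / (E + p 0 ^ 2 + p 1 ^ 2)) •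
          lieDeriv (xiRB ρ) (cigarRB E) p := by
    intro p
    rw [show lieDeriv (xiRB ρ) (cigarRB E)
        = fun q => (-4 * (1 - 2 * ρ) * E / (E + q 0 ^ 2 + q 1 ^ 2) ^ 2)
            • (1 : Matrix (Fin 2) (Fin 2) ℝ) from funext h1,
      show xiRB ρ = fun q => (-2 * (1 - 2 * ρ)) • q from rfl,
      lieDeriv_smul_one, smul_smul]
    congr 1
    rw [pd_inv_sq E _ p (hD p) 0, pd_inv_sq E _ p (hD p) 1]
    field_simp
    ring
  exact ⟨h1', h2, ⟨fun p => -4 * (1 - 2 * ρ) * (E - p 0 ^ 2 - p 1 ^ 2) / (E + p 0 ^ 2 + p 1 ^ 2),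
    h2⟩⟩
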